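/- For every prime power q, all integers c, d ≥ 1, every integer n ≥ 1 such that d divides cn, and every integer 0 ≤ l ≤ n, the expected number of codewords of Hamming weight l in the random (c,d)-regular LDPC code ensemble satisfies E[A_{q,c,d}^{(n)}(l)] = C(n,l) · coef(g_{q,d}^{(cn/d)}(x), x^{cl}) / ( C(cn,cl) · (q−1)^{(c−1)l} ). -/

import Mathlib

open Real Set Filter Polynomial
open scoped Classical

/-- The polynomial `g_{q,d}^{(n)}(x) = q^{-n}·([1+(q−1)x]^d + (q−1)(1−x)^d)^n`. -/
noncomputable def gPoly (q d n : ℕ) : Polynomial ℝ :=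
  Polynomial.C (((q : ℝ) ^ n)⁻¹) *
    ((Polynomial.C 1 + Polynomial.C ((q : ℝ) - 1) * Polynomial.X) ^ d +
      Polynomial.C ((q : ℝ) - 1) * (Polynomial.C 1 - Polynomial.X) ^ d) ^ n

/-- The `c`-fold repetition map `F_q^n → F_q^{cn}`: coordinate `j` of the repetition
vector equals coordinate `⌊j/c⌋` of `x`. -/
def repFun (c n : ℕ) {F : Type*} [Zero F] (x : Fin n → F) : Fin (c * n) → F :=
  fun j => if h : j.val / c < n then x ⟨j.val / c, h⟩ else 0

/-- The parity-check map `f_{π,μ}` of the `(c,d)`-regular LDPC ensemble: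
`f(x)_m = ∑_{j<d} μ_{md+j} · r_{π⁻¹(md+j)}` where `r` is the `c`-fold repetition of `x`. -/
noncomputable def chkFun (c d n : ℕ) {F : Type*} [Field F]
    (perm : Equiv.Perm (Fin (c * n))) (mul : Fin (c * n) → Fˣ)
    (x : Fin n → F) : Fin (c * n / d) → F :=
  fun m => ∑ j : Fin d,
    if h : m.val * d + j.val < c * n then
      ((mul ⟨m.val * d + j.val, h⟩ : Fˣ) : F) * repFun c n x (perm.symm ⟨m.val * d + j.val, h⟩)
    else 0

/-- The number of codewords of Hamming weight `l` in the LDPC code determined by `(π, μ)`. -/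
noncomputable def Acount (c d n : ℕ) {F : Type*} [Field F] [Fintype F] [DecidableEq F]
    (perm : Equiv.Perm (Fin (c * n))) (mul : Fin (c * n) → Fˣ) (l : ℕ) : ℕ :=
  Nat.card {x : Fin n → F // chkFun c d n perm mul x = 0 ∧ hammingNorm x = l}

/-- The average (over the uniformly random pair `(π, μ)`) of the number of codewords of
Hamming weight `l` in the `(c,d)`-regular LDPC ensemble over `F`. -/
noncomputable def expA (c d n l : ℕ) (F : Type*) [Field F] [Fintype F] [DecidableEq F] : ℝ :=
  (∑ perm : Equiv.Perm (Fin (c * n)), ∑ mul : Fin (c * n) → Fˣ, (Acount c d n perm mul l : ℝ)) /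
    ((Nat.factorial (c * n) : ℝ) * ((Fintype.card F : ℝ) - 1) ^ (c * n))

section ZS
variable (F : Type*) [Field F] [Fintype F] [DecidableEq F]

/-- number of `k`-tuples of nonzero elements summing to zero -/
noncomputable def zsCard (k : ℕ) : ℕ :=
  Nat.card {u : Fin k → Fˣ // (∑ i, (u i : F)) = 0}

lemma zsCard_zero : zsCard F 0 = 1 := by
  rw [zsCard, Nat.card_eq_one_iff_unique]
  constructor
  · constructor
    intro a b
    exact Subtype.ext (funext fun i => i.elim0)
  · exact ⟨⟨fun i => i.elim0, by simp⟩⟩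

noncomputable def zsSuccEquiv (k : ℕ) :
    {u : Fin (k+1) → Fˣ // (∑ i, (u i : F)) = 0} ≃ {v : Fin k → Fˣ // (∑ i, (v i : F)) ≠ 0} where
  toFun u := ⟨fun i => u.1 i.castSucc, by
    have h := u.2
    rw [Fin.sum_univ_castSucc] at h
    intro h0
    rw [h0, zero_add] at h
    exact (u.1 (Fin.last k)).ne_zero h⟩
  invFun v := ⟨Fin.snoc v.1 (Units.mk0 (-(∑ i, (v.1 i : F))) (neg_ne_zero.2 v.2)), by
    rw [Fin.sum_univ_castSucc]
    simp [Fin.snoc_castSucc, Fin.snoc_last]⟩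
  left_inv u := by
    apply Subtype.ext
    funext i
    simp only
    cases i using Fin.lastCases with
    | last =>
      rw [Fin.snoc_last]
      apply Units.ext
      have h := u.2
      rw [Fin.sum_univ_castSucc] at h
      simp only [Units.val_mk0]
      linear_combination -h
    | cast i => rw [Fin.snoc_castSucc]
  right_inv v := by
    apply Subtype.ext
    funext i
    simp only [Fin.snoc_castSucc]

lemma zsCard_succ (k : ℕ) :
    zsCard F (k+1) + zsCard F k = (Fintype.card Fˣ) ^ k := by
  have h1 : zsCard F (k+1) = Nat.card {v : Fin k → Fˣ // (∑ i, (v i : F)) ≠ 0} :=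
    Nat.card_congr (zsSuccEquiv F k)
  have h2 : Nat.card {v : Fin k → Fˣ // (∑ i, (v i : F)) ≠ 0}
      = Fintype.card (Fin k → Fˣ) - zsCard F k := by
    rw [zsCard, Nat.card_eq_fintype_card, Nat.card_eq_fintype_card]
    exact Fintype.card_subtype_compl _
  have h3 : zsCard F k ≤ Fintype.card (Fin k → Fˣ) := by
    rw [zsCard, Nat.card_eq_fintype_card]; exact Fintype.card_subtype_le _
  rw [h1, h2, Fintype.card_fun, Fintype.card_fin]
  rw [Fintype.card_fun, Fintype.card_fin] at h3
  exact Nat.sub_add_cancel h3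

lemma zsCard_closed (k : ℕ) :
    (Fintype.card F : ℤ) * zsCard F k
      = (Fintype.card Fˣ : ℤ) ^ k + (Fintype.card Fˣ) * (-1) ^ k := by
  have hq : (Fintype.card Fˣ : ℤ) = (Fintype.card F : ℤ) - 1 := by
    rw [Fintype.card_units]
    have : 1 ≤ Fintype.card F := Fintype.card_pos
    push_cast [Nat.cast_sub this]; ring
  induction k with
  | zero => rw [zsCard_zero]; rw [hq]; push_cast; ring
  | succ k ih =>
      have h := zsCard_succ F k
      have h' : (zsCard F (k+1) : ℤ) = (Fintype.card Fˣ : ℤ)^k - zsCard F k := by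
        have := congrArg (fun m : ℕ => (m : ℤ)) h
        push_cast at this ⊢
        linarith
      rw [h', mul_sub, ih, hq]
      ring

end ZS

section Supp
variable {F : Type*} [Field F] [Fintype F] [DecidableEq F]
variable {ι : Type*} [Fintype ι] [DecidableEq ι]

omit [Fintype F] [DecidableEq F] [DecidableEq ι] in
lemma sum_of_supp (v : ι → F) (s : Finset ι) (h : ∀ i, i ∉ s → v i = 0) :
    ∑ i, v i = ∑ i ∈ s.attach, v i.1 := by
  rw [Finset.sum_attach s (fun i => v i)]
  exact (Finset.sum_subset (Finset.subset_univ s) (fun x _ hx => h x hx)).symm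

noncomputable def suppEquiv (s : Finset ι) :
    {v : ι → F // ∀ i, v i ≠ 0 ↔ i ∈ s} ≃ ({i // i ∈ s} → Fˣ) where
  toFun v := fun i => Units.mk0 (v.1 i.1) ((v.2 i.1).2 i.2)
  invFun u := ⟨fun i => if h : i ∈ s then (u ⟨i, h⟩ : F) else 0, by
    intro i
    by_cases h : i ∈ s <;> simp [h]⟩
  left_inv v := by
    apply Subtype.ext; funext i
    by_cases h : i ∈ s
    · simp [h]
    · simp only [dif_neg h]
      exact (not_not.mp (fun hne => h ((v.2 i).1 hne))).symm
  right_inv u := by funext i; apply Units.ext; simp [i.2]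

lemma card_pattern (s : Finset ι) :
    Nat.card {v : ι → F // ∀ i, v i ≠ 0 ↔ i ∈ s} = (Fintype.card Fˣ) ^ s.card := by
  rw [Nat.card_congr (suppEquiv s), Nat.card_eq_fintype_card, Fintype.card_fun,
    Fintype.card_coe]

noncomputable def sumZeroEquiv {α β : Type*} [Fintype α] [Fintype β] (e : α ≃ β) :
    {u : α → Fˣ // ∑ i, (u i : F) = 0} ≃ {u : β → Fˣ // ∑ i, (u i : F) = 0} where
  toFun u := ⟨u.1 ∘ e.symm, by
    have := Equiv.sum_comp e.symm (fun a => (u.1 a : F))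
    simpa [Function.comp] using this.trans u.2⟩
  invFun u := ⟨u.1 ∘ e, by
    have := Equiv.sum_comp e (fun a => (u.1 a : F))
    simpa [Function.comp] using this.trans u.2⟩
  left_inv u := by apply Subtype.ext; funext i; simp
  right_inv u := by apply Subtype.ext; funext i; simp

noncomputable def suppSumEquiv (s : Finset ι) :
    {v : ι → F // (∀ i, v i ≠ 0 ↔ i ∈ s) ∧ ∑ i, v i = 0}
      ≃ {u : {i // i ∈ s} → Fˣ // ∑ i, (u i : F) = 0} where
  toFun v := ⟨fun i => Units.mk0 (v.1 i.1) ((v.2.1 i.1).2 i.2), by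
    have h0 : ∀ i, i ∉ s → v.1 i = 0 := fun i hi =>
      not_not.mp (fun hne => hi ((v.2.1 i).1 hne))
    have h1 : (∑ i : {i // i ∈ s}, ((Units.mk0 (v.1 i.1) ((v.2.1 i.1).2 i.2) : Fˣ) : F))
        = ∑ i ∈ s.attach, v.1 i.1 := by
      simp
    rw [h1, ← sum_of_supp v.1 s h0]
    exact v.2.2⟩
  invFun u := ⟨fun i => if h : i ∈ s then (u.1 ⟨i, h⟩ : F) else 0, by
    constructor
    · intro i; by_cases h : i ∈ s <;> simp [h]
    · have h0 : ∀ i, i ∉ s → (if h : i ∈ s then (u.1 ⟨i, h⟩ : F) else 0) = 0 := by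
        intro i hi; simp [hi]
      rw [sum_of_supp _ s h0]
      have h1 : (∑ i ∈ s.attach, if h : i.1 ∈ s then (u.1 ⟨i.1, h⟩ : F) else 0)
          = ∑ i : {i // i ∈ s}, (u.1 i : F) := by
        apply Finset.sum_congr rfl
        intro i _
        simp [i.2]
      rw [h1]
      exact u.2⟩
  left_inv v := by
    apply Subtype.ext; funext i
    by_cases h : i ∈ s
    · simp [h]
    · simp only [dif_neg h]
      exact (not_not.mp (fun hne => h ((v.2.1 i).1 hne))).symm
  right_inv u := by apply Subtype.ext; funext i; apply Units.ext; simp [i.2]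

lemma card_pattern_sum (s : Finset ι) :
    Nat.card {v : ι → F // (∀ i, v i ≠ 0 ↔ i ∈ s) ∧ ∑ i, v i = 0}
      = zsCard F s.card := by
  rw [Nat.card_congr (suppSumEquiv s),
    Nat.card_congr (sumZeroEquiv (F := F) (s.equivFinOfCardEq rfl)), zsCard]

omit [Fintype F] [DecidableEq ι] in
lemma hammingNorm_def (v : ι → F) :
    hammingNorm v = (Finset.univ.filter (fun i => v i ≠ 0)).card := rfl

lemma card_weight_inter (P : (ι → F) → Prop) (k : ℕ) :
    Nat.card {v : ι → F // P v ∧ hammingNorm v = k}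
      = ∑ s ∈ Finset.univ.filter (fun s : Finset ι => s.card = k),
          Nat.card {v : ι → F // (∀ i, v i ≠ 0 ↔ i ∈ s) ∧ P v} := by
  classical
  rw [Nat.card_eq_fintype_card, Fintype.card_subtype]
  rw [Finset.card_eq_sum_card_fiberwise
    (f := fun v : ι → F => Finset.univ.filter (fun i => v i ≠ 0))
    (t := Finset.univ.filter (fun s : Finset ι => s.card = k))
    (fun v hv => by
      simp only [Finset.coe_filter, Set.mem_setOf_eq, Finset.mem_filter, Finset.mem_univ, true_and] at hv ⊢
      rw [← hammingNorm_def]; exact hv.2)]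
  refine Finset.sum_congr rfl (fun s hs => ?_)
  simp only [Finset.mem_filter, Finset.mem_univ, true_and] at hs
  rw [Nat.card_eq_fintype_card, Fintype.card_subtype, Finset.filter_filter]
  congr 1
  apply Finset.filter_congr
  intro v _
  constructor
  · rintro ⟨⟨hP, _⟩, hsup⟩
    refine ⟨fun i => ?_, hP⟩
    rw [← hsup]; simp
  · rintro ⟨hpat, hP⟩
    have hsup : Finset.univ.filter (fun i => v i ≠ 0) = s := by
      ext i; simp [hpat i]
    refine ⟨⟨hP, ?_⟩, hsup⟩
    rw [hammingNorm_def, hsup, hs]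

lemma card_weight (k : ℕ) :
    Nat.card {v : ι → F // hammingNorm v = k}
      = (Fintype.card ι).choose k * (Fintype.card Fˣ) ^ k := by
  have e : {v : ι → F // hammingNorm v = k}
      ≃ {v : ι → F // (fun _ => True) v ∧ hammingNorm v = k} :=
    Equiv.subtypeEquivRight (by simp)
  rw [Nat.card_congr e, card_weight_inter (fun _ => True) k]
  have hcongr : ∀ s ∈ Finset.univ.filter (fun s : Finset ι => s.card = k),
      Nat.card {v : ι → F // (∀ i, v i ≠ 0 ↔ i ∈ s) ∧ (fun _ => True) v}
        = (Fintype.card Fˣ) ^ k := by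
    intro s hs
    simp only [Finset.mem_filter, Finset.mem_univ, true_and] at hs
    have e2 : {v : ι → F // (∀ i, v i ≠ 0 ↔ i ∈ s) ∧ (fun _ => True) v}
        ≃ {v : ι → F // ∀ i, v i ≠ 0 ↔ i ∈ s} := Equiv.subtypeEquivRight (by simp)
    rw [Nat.card_congr e2, card_pattern, hs]
  rw [Finset.sum_congr rfl hcongr, Finset.sum_const, smul_eq_mul]
  congr 1
  rw [← Fintype.card_finset_len, Fintype.card_subtype]

lemma card_zerosum_weight (k : ℕ) :
    Nat.card {v : ι → F // (∑ i, v i = 0) ∧ hammingNorm v = k}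
      = (Fintype.card ι).choose k * zsCard F k := by
  rw [card_weight_inter (fun v : ι → F => ∑ i, v i = 0) k]
  have hcongr : ∀ s ∈ Finset.univ.filter (fun s : Finset ι => s.card = k),
      Nat.card {v : ι → F // (∀ i, v i ≠ 0 ↔ i ∈ s) ∧ ∑ i, v i = 0}
        = zsCard F k := by
    intro s hs
    simp only [Finset.mem_filter, Finset.mem_univ, true_and] at hs
    rw [card_pattern_sum, hs]
  rw [Finset.sum_congr rfl hcongr, Finset.sum_const, smul_eq_mul]
  congr 1
  rw [← Fintype.card_finset_len, Fintype.card_subtype]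

end Supp

section Poly

lemma coeff_one_add_CX_pow (a : ℝ) (d k : ℕ) :
    (((1 : ℝ[X]) + C a * X) ^ d).coeff k = d.choose k * a ^ k := by
  rw [add_comm, add_pow, Polynomial.finset_sum_coeff]
  have hterm : ∀ m ∈ Finset.range (d+1),
      ((C a * X) ^ m * (1:ℝ[X]) ^ (d - m) * (d.choose m : ℝ[X])).coeff k
        = (if k = m then (d.choose m : ℝ) * a ^ m else 0) := by
    intro m _
    rw [one_pow, mul_one, mul_pow, ← C_pow, ← Polynomial.C_eq_natCast,
      Polynomial.coeff_mul_C, Polynomial.coeff_C_mul, Polynomial.coeff_X_pow]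
    by_cases h : k = m <;> simp [h] <;> ring
  rw [Finset.sum_congr rfl hterm, Finset.sum_ite_eq]
  by_cases h : k ∈ Finset.range (d + 1)
  · simp [h]
  · simp only [h, if_false]
    rw [Finset.mem_range, not_lt] at h
    rw [Nat.choose_eq_zero_of_lt (by omega)]
    simp

lemma coeff_one_sub_X_pow (d k : ℕ) :
    (((1:ℝ[X]) - X) ^ d).coeff k = (d.choose k : ℝ) * (-1 : ℝ) ^ k := by
  have h : (1:ℝ[X]) - X = 1 + C (-1 : ℝ) * X := by
    have : C (-1 : ℝ) = -1 := by simp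
    rw [this]; ring
  rw [h, coeff_one_add_CX_pow]

variable {F : Type*} [Field F] [Fintype F] [DecidableEq F]
variable {ι : Type*} [Fintype ι] [DecidableEq ι]

noncomputable def enumPoly (A : Finset (ι → F)) : ℝ[X] := ∑ v ∈ A, X ^ (hammingNorm v)

omit [Fintype F] in
lemma coeff_enumPoly (A : Finset (ι → F)) (k : ℕ) :
    (enumPoly A).coeff k = ((A.filter (fun v => hammingNorm v = k)).card : ℝ) := by
  rw [enumPoly, Polynomial.finset_sum_coeff, Finset.card_filter]
  push_cast
  apply Finset.sum_congr rfl
  intro v _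
  rw [Polynomial.coeff_X_pow]
  by_cases h : hammingNorm v = k
  · simp [h]
  · rw [if_neg (fun hh => h hh.symm), if_neg h]

end Poly

section Blocks
variable {F : Type*} [Field F] [Fintype F] [DecidableEq F]
variable {ι : Type*} [Fintype ι] [DecidableEq ι]

lemma block_poly_id (d : ℕ) :
    (C (Fintype.card F : ℝ)) *
      enumPoly (Finset.univ.filter (fun v : Fin d → F => ∑ i, v i = 0))
      = (1 + C ((Fintype.card F : ℝ) - 1) * X) ^ d
        + C ((Fintype.card F : ℝ) - 1) * ((1 : ℝ[X]) - X) ^ d := by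
  have hu : ((Fintype.card Fˣ : ℕ) : ℝ) = (Fintype.card F : ℝ) - 1 := by
    rw [Fintype.card_units]
    have h1 : 1 ≤ Fintype.card F := Fintype.card_pos
    push_cast [Nat.cast_sub h1]; ring
  ext k
  rw [Polynomial.coeff_C_mul, coeff_enumPoly, Polynomial.coeff_add,
    coeff_one_add_CX_pow, Polynomial.coeff_C_mul, coeff_one_sub_X_pow]
  have hcount : ((Finset.univ.filter (fun v : Fin d → F => ∑ i, v i = 0)).filter
      (fun v => hammingNorm v = k)).card = d.choose k * zsCard F k := by
    rw [Finset.filter_filter]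
    have : (Finset.univ.filter fun v : Fin d → F => (∑ i, v i = 0) ∧ hammingNorm v = k).card
        = Nat.card {v : Fin d → F // (∑ i, v i = 0) ∧ hammingNorm v = k} := by
      rw [Nat.card_eq_fintype_card, Fintype.card_subtype]
    rw [this, card_zerosum_weight, Fintype.card_fin]
  rw [hcount]
  have hz := zsCard_closed F k
  have hzR : (Fintype.card F : ℝ) * (zsCard F k : ℝ)
      = ((Fintype.card Fˣ : ℕ) : ℝ) ^ k + ((Fintype.card Fˣ : ℕ) : ℝ) * (-1) ^ k := by
    exact_mod_cast congrArg (fun z : ℤ => (z : ℝ)) hz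
  push_cast
  rw [hu] at hzR
  linear_combination (d.choose k : ℝ) * hzR

lemma hammingNorm_blocks {M d : ℕ} (B : Fin M × Fin d ≃ ι) (s : ι → F) :
    hammingNorm s = ∑ b : Fin M, hammingNorm (fun j => s (B (b, j))) := by
  rw [hammingNorm_def, Finset.card_filter]
  rw [← Equiv.sum_comp B (fun i => if s i ≠ 0 then 1 else 0)]
  rw [Fintype.sum_prod_type]
  apply Finset.sum_congr rfl; intro b _
  rw [hammingNorm_def, Finset.card_filter]

lemma enum_pow {M d : ℕ} (B : Fin M × Fin d ≃ ι) :
    enumPoly (Finset.univ.filter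
        (fun s : ι → F => ∀ b : Fin M, ∑ j : Fin d, s (B (b, j)) = 0))
      = (enumPoly (Finset.univ.filter (fun v : Fin d → F => ∑ i, v i = 0))) ^ M := by
  have hpow : (enumPoly (Finset.univ.filter (fun v : Fin d → F => ∑ i, v i = 0))) ^ M
      = ∏ _b : Fin M, enumPoly (Finset.univ.filter (fun v : Fin d → F => ∑ i, v i = 0)) := by
    rw [Finset.prod_const, Finset.card_univ, Fintype.card_fin]
  rw [hpow]
  simp only [enumPoly]
  rw [Finset.prod_univ_sum]
  rw [eq_comm]
  refine Finset.sum_nbij'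
    (i := fun t => fun i : ι => t (B.symm i).1 (B.symm i).2)
    (j := fun s => fun b j => s (B (b, j)))
    ?_ ?_ ?_ ?_ ?_
  · intro t ht
    rw [Fintype.mem_piFinset] at ht
    simp only [Finset.mem_filter, Finset.mem_univ, true_and]
    intro b
    have : ∀ j : Fin d, t (B.symm (B (b, j))).1 (B.symm (B (b, j))).2 = t b j := by
      intro j; rw [Equiv.symm_apply_apply]
    rw [Finset.sum_congr rfl (fun j _ => this j)]
    have hb := ht b
    simpa using hb
  · intro s hs
    rw [Fintype.mem_piFinset]
    simp only [Finset.mem_filter, Finset.mem_univ, true_and] at hs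
    intro b
    simpa using hs b
  · intro t _
    funext b j
    simp [Equiv.symm_apply_apply]
  · intro s _
    funext i
    simp [Equiv.apply_symm_apply]
  · intro t _
    rw [Finset.prod_pow_eq_pow_sum]
    congr 1
    rw [hammingNorm_blocks B]
    apply Finset.sum_congr rfl
    intro b _
    congr 1
    funext j
    simp [Equiv.symm_apply_apply]

lemma coeff_chk_card {M d : ℕ} (B : Fin M × Fin d ≃ ι) (w : ℕ) :
    (enumPoly (Finset.univ.filter
        (fun s : ι → F => ∀ b : Fin M, ∑ j : Fin d, s (B (b, j)) = 0))).coeff w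
      = (Nat.card {s : ι → F //
          (∀ b : Fin M, ∑ j : Fin d, s (B (b, j)) = 0) ∧ hammingNorm s = w} : ℝ) := by
  rw [coeff_enumPoly, Finset.filter_filter]
  congr 1
  rw [Nat.card_eq_fintype_card, Fintype.card_subtype]

lemma gPoly_coeff_eq {M d : ℕ} (B : Fin M × Fin d ≃ ι) (w : ℕ) :
    (gPoly (Fintype.card F) d M).coeff w
      = (Nat.card {s : ι → F //
          (∀ b : Fin M, ∑ j : Fin d, s (B (b, j)) = 0) ∧ hammingNorm s = w} : ℝ) := by
  have hq0 : (Fintype.card F : ℝ) ≠ 0 := by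
    have : 1 ≤ Fintype.card F := Fintype.card_pos
    positivity
  have key : gPoly (Fintype.card F) d M
      = enumPoly (Finset.univ.filter
          (fun s : ι → F => ∀ b : Fin M, ∑ j : Fin d, s (B (b, j)) = 0)) := by
    rw [gPoly, enum_pow B]
    have h1 : ((Polynomial.C (1:ℝ) + Polynomial.C ((Fintype.card F : ℝ) - 1) * Polynomial.X) ^ d +
        Polynomial.C ((Fintype.card F : ℝ) - 1) * (Polynomial.C (1:ℝ) - Polynomial.X) ^ d)
        = C (Fintype.card F : ℝ) *
          enumPoly (Finset.univ.filter (fun v : Fin d → F => ∑ i, v i = 0)) := by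
      rw [block_poly_id]
      simp [map_one]
    rw [h1, mul_pow, ← C_pow, ← mul_assoc, ← C_mul,
      inv_mul_cancel₀ (pow_ne_zero _ hq0)]
    simp
  rw [key, coeff_chk_card]

end Blocks

section Perm
variable {ι : Type*} [Fintype ι] [DecidableEq ι]

noncomputable def permMapsEquiv (A B : Finset ι) :
    {pp : Equiv.Perm ι // ∀ i, i ∈ A ↔ pp i ∈ B}
      ≃ ({i // i ∈ A} ≃ {i // i ∈ B}) × ({i // ¬ i ∈ A} ≃ {i // ¬ i ∈ B}) where
  toFun pp := (Equiv.subtypeEquiv pp.1 pp.2,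
              Equiv.subtypeEquiv pp.1 (fun a => not_iff_not.mpr (pp.2 a)))
  invFun e := ⟨(Equiv.sumCompl (· ∈ A)).symm.trans
      ((e.1.sumCongr e.2).trans (Equiv.sumCompl (· ∈ B))), by
    intro i
    by_cases h : i ∈ A
    · have hv : ((Equiv.sumCompl (· ∈ A)).symm.trans
          ((e.1.sumCongr e.2).trans (Equiv.sumCompl (· ∈ B)))) i = (e.1 ⟨i, h⟩ : ι) := by
        simp [Equiv.sumCompl_symm_apply_of_pos h]
      rw [hv]
      exact iff_of_true h (e.1 ⟨i, h⟩).2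
    · have hv : ((Equiv.sumCompl (· ∈ A)).symm.trans
          ((e.1.sumCongr e.2).trans (Equiv.sumCompl (· ∈ B)))) i = (e.2 ⟨i, h⟩ : ι) := by
        simp [Equiv.sumCompl_symm_apply_of_neg h]
      rw [hv]
      exact iff_of_false h (e.2 ⟨i, h⟩).2⟩
  left_inv pp := by
    apply Subtype.ext
    apply Equiv.ext
    intro i
    by_cases h : i ∈ A
    · simp [Equiv.sumCompl_symm_apply_of_pos h]
    · simp [Equiv.sumCompl_symm_apply_of_neg h]
  right_inv e := by
    apply Prod.ext
    · apply Equiv.ext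
      intro a
      apply Subtype.ext
      simp [Equiv.sumCompl_symm_apply_of_pos a.2]
    · apply Equiv.ext
      intro a
      apply Subtype.ext
      simp [Equiv.sumCompl_symm_apply_of_neg a.2]

lemma card_perm_maps (A B : Finset ι) :
    Nat.card {pp : Equiv.Perm ι // ∀ i, i ∈ A ↔ pp i ∈ B}
      = if A.card = B.card then
          (A.card).factorial * (Fintype.card ι - A.card).factorial else 0 := by
  by_cases h : A.card = B.card
  · rw [if_pos h, Nat.card_congr (permMapsEquiv A B), Nat.card_eq_fintype_card,
      Fintype.card_prod]
    have hAB : Fintype.card {i // i ∈ A} = Fintype.card {i // i ∈ B} := by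
      rw [Fintype.card_coe, Fintype.card_coe, h]
    have hABc : Fintype.card {i // ¬ i ∈ A} = Fintype.card {i // ¬ i ∈ B} := by
      rw [Fintype.card_subtype_compl, Fintype.card_subtype_compl, hAB]
    rw [Fintype.card_equiv (Fintype.equivOfCardEq hAB),
      Fintype.card_equiv (Fintype.equivOfCardEq hABc),
      Fintype.card_coe, Fintype.card_subtype_compl, Fintype.card_coe]
  · rw [if_neg h]
    rw [Nat.card_eq_zero]
    left
    constructor
    intro pp
    exact h (by
      rw [← Fintype.card_coe A, ← Fintype.card_coe B]
      exact Fintype.card_congr (Equiv.subtypeEquiv pp.1 pp.2))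

end Perm

section Mu
variable {F : Type*} [Field F] [Fintype F] [DecidableEq F]
variable {ι : Type*} [Fintype ι] [DecidableEq ι]

noncomputable def muEquiv (P : (ι → F) → Prop) (t : ι → F) :
    {μ : ι → Fˣ // P (fun i => (μ i : F) * t i)}
      ≃ {s : ι → F // P s ∧ ∀ i, (s i ≠ 0 ↔ t i ≠ 0)} × ({i : ι // t i = 0} → Fˣ) where
  toFun μ := (⟨fun i => (μ.1 i : F) * t i, μ.2, fun i => by
      constructor
      · intro h hti
        exact h (by simp [hti])
      · intro h
        exact mul_ne_zero (μ.1 i).ne_zero h⟩,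
    fun i => μ.1 i.1)
  invFun p := ⟨fun i =>
      if h : t i = 0 then p.2 ⟨i, h⟩
      else Units.mk0 (p.1.1 i * (t i)⁻¹)
        (mul_ne_zero ((p.1.2.2 i).mpr h) (inv_ne_zero h)), by
    have hfun : (fun i => ((if h : t i = 0 then p.2 ⟨i, h⟩
        else Units.mk0 (p.1.1 i * (t i)⁻¹)
          (mul_ne_zero ((p.1.2.2 i).mpr h) (inv_ne_zero h)) : Fˣ) : F) * t i) = p.1.1 := by
      funext i
      by_cases h : t i = 0
      · rw [dif_pos h, h, mul_zero]
        exact (not_not.mp (fun hne => ((p.1.2.2 i).mp hne) h)).symm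
      · rw [dif_neg h, Units.val_mk0]
        field_simp
    rw [hfun]
    exact p.1.2.1⟩
  left_inv μ := by
    apply Subtype.ext
    funext i
    by_cases h : t i = 0
    · simp only [dif_pos h]
    · simp only [dif_neg h]
      apply Units.ext
      rw [Units.val_mk0]
      field_simp
  right_inv p := by
    apply Prod.ext
    · apply Subtype.ext
      funext i
      simp only
      by_cases h : t i = 0
      · rw [dif_pos h, h, mul_zero]
        exact (not_not.mp (fun hne => ((p.1.2.2 i).mp hne) h)).symm
      · rw [dif_neg h, Units.val_mk0]
        field_simp
    · funext i
      simp only [dif_pos i.2]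

lemma card_mu (P : (ι → F) → Prop) (t : ι → F) :
    Nat.card {μ : ι → Fˣ // P (fun i => (μ i : F) * t i)}
      = Nat.card {s : ι → F // P s ∧ ∀ i, (s i ≠ 0 ↔ t i ≠ 0)}
        * (Fintype.card Fˣ) ^ (Nat.card {i : ι // t i = 0}) := by
  rw [Nat.card_congr (muEquiv P t), Nat.card_prod, Nat.card_fun,
    Nat.card_eq_fintype_card (α := Fˣ)]

end Mu

lemma natCard_filter {α : Type*} [Fintype α] (p : α → Prop) [DecidablePred p] :
    Nat.card {a : α // p a} = ∑ a : α, if p a then 1 else 0 := by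
  rw [Nat.card_eq_fintype_card, Fintype.card_subtype, Finset.card_filter]

lemma exp_split (l a b : ℕ) (h1 : l ≤ a) (h2 : a ≤ b) : l + (b - a) + (a - l) = b := by
  omega


/-- For every prime power `q` (i.e. for every finite field `F` of order
`q = Fintype.card F`), all integers `c, d ≥ 1`, every `n ≥ 1` with `d ∣ cn`, and every
`0 ≤ l ≤ n`, the expected number of weight-`l` codewords in the `(c,d)`-regular LDPC
ensemble equals `C(n,l)·coef(g_{q,d}^{(cn/d)}, x^{cl}) / (C(cn,cl)·(q−1)^{(c−1)l})`. -/
theorem ldpc_average_weight_distribution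
    (F : Type*) [Field F] [Fintype F] [DecidableEq F]
    (c d n l : ℕ) (hc : 1 ≤ c) (hd : 1 ≤ d) (hn : 1 ≤ n) (hdvd : d ∣ c * n) (hl : l ≤ n) :
    expA c d n l F =
      (n.choose l : ℝ) * (gPoly (Fintype.card F) d (c * n / d)).coeff (c * l) /
        (((c * n).choose (c * l) : ℝ) * ((Fintype.card F : ℝ) - 1) ^ ((c - 1) * l)) := by
  classical
  have hc0 : 0 < c := hc
  have hd0 : 0 < d := hd
  have hMd : (c * n / d) * d = c * n := Nat.div_mul_cancel hdvd
  let B : Fin (c * n / d) × Fin d ≃ Fin (c * n) := finProdFinEquiv.trans (finCongr hMd)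
  -- index bound for blocks
  have hlt : ∀ (b : Fin (c * n / d)) (j : Fin d), b.1 * d + j.1 < c * n := by
    intro b j
    calc b.1 * d + j.1 < b.1 * d + d := Nat.add_lt_add_left j.2 _
    _ = (b.1 + 1) * d := by ring
    _ ≤ (c * n / d) * d := Nat.mul_le_mul_right d (Nat.succ_le_of_lt b.2)
    _ = c * n := hMd
  have hBval : ∀ (b : Fin (c * n / d)) (j : Fin d),
      (⟨b.1 * d + j.1, hlt b j⟩ : Fin (c * n)) = B (b, j) := by
    intro b j
    apply Fin.ext
    have h1 : ((B (b, j)) : ℕ) = j.1 + d * b.1 := by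
      simp [B, Equiv.trans_apply, finCongr_apply, Fin.coe_cast, finProdFinEquiv_apply_val]
    rw [h1]
    ring
  -- repetition lemmas
  have hjc : ∀ j : Fin (c * n), j.1 / c < n := by
    intro j
    exact (Nat.div_lt_iff_lt_mul hc0).mpr (by rw [mul_comm n c]; exact j.2)
  have hrep : ∀ (x : Fin n → F) (j : Fin (c * n)),
      repFun c n x j = x ⟨j.1 / c, hjc j⟩ := by
    intro x j; rw [repFun, dif_pos (hjc j)]
  have hnormrep : ∀ x : Fin n → F, hammingNorm (repFun c n x) = c * hammingNorm x := by
    intro x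
    let E : Fin n × Fin c ≃ Fin (c * n) := finProdFinEquiv.trans (finCongr (mul_comm n c))
    have hEval : ∀ (i : Fin n) (k : Fin c), repFun c n x (E (i, k)) = x i := by
      intro i k
      rw [hrep]
      apply congrArg
      apply Fin.ext
      have hEv : ((E (i, k)) : ℕ) = k.1 + c * i.1 := by
        simp [E, Equiv.trans_apply, finCongr_apply, Fin.coe_cast, finProdFinEquiv_apply_val]
      show ((E (i, k)) : ℕ) / c = i.1
      rw [hEv, Nat.add_mul_div_left _ _ hc0, Nat.div_eq_of_lt k.2, zero_add]
    rw [hammingNorm_def, Finset.card_filter,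
      ← Equiv.sum_comp E (fun j => if repFun c n x j ≠ 0 then 1 else 0),
      Fintype.sum_prod_type]
    have hterm : ∀ i : Fin n, (∑ k : Fin c,
        if repFun c n x (E (i, k)) ≠ 0 then 1 else 0) = c * (if x i ≠ 0 then 1 else 0) := by
      intro i
      rw [Finset.sum_congr rfl (fun k _ => by rw [hEval i k])]
      rw [Finset.sum_const, Finset.card_univ, Fintype.card_fin, smul_eq_mul]
    rw [Finset.sum_congr rfl (fun i _ => hterm i), ← Finset.mul_sum,
      hammingNorm_def, Finset.card_filter]
  -- check map in block form
  have hchk : ∀ (pp : Equiv.Perm (Fin (c * n))) (μ : Fin (c * n) → Fˣ) (x : Fin n → F),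
      (chkFun c d n pp μ x = 0) ↔
        ∀ b : Fin (c * n / d), ∑ j : Fin d,
          (μ (B (b, j)) : F) * repFun c n x (pp.symm (B (b, j))) = 0 := by
    intro pp μ x
    have h0 : (chkFun c d n pp μ x = 0) ↔ ∀ b, chkFun c d n pp μ x b = 0 := by
      rw [funext_iff]
      exact forall_congr' (fun b => by rw [Pi.zero_apply])
    rw [h0]
    apply forall_congr'
    intro b
    have hterm : chkFun c d n pp μ x b
        = ∑ j : Fin d, (μ (B (b, j)) : F) * repFun c n x (pp.symm (B (b, j))) := by
      rw [chkFun]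
      apply Finset.sum_congr rfl
      intro j _
      rw [dif_pos (hlt b j), hBval b j]
    rw [hterm]
  -- the codeword-number
  have hgco : (gPoly (Fintype.card F) d (c * n / d)).coeff (c * l)
      = (Nat.card {s : Fin (c * n) → F //
          (∀ b : Fin (c * n / d), ∑ j : Fin d, s (B (b, j)) = 0)
            ∧ hammingNorm s = c * l} : ℝ) := gPoly_coeff_eq B (c * l)
  set Nw : ℕ := Nat.card {s : Fin (c * n) → F //
      (∀ b : Fin (c * n / d), ∑ j : Fin d, s (B (b, j)) = 0)
        ∧ hammingNorm s = c * l} with hNw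
  -- pattern condition as permutation-mapping condition
  have hpat : ∀ (r s : Fin (c * n) → F) (pp : Equiv.Perm (Fin (c * n))),
      (∀ i, s i ≠ 0 ↔ r (pp.symm i) ≠ 0) ↔
        (∀ i, i ∈ Finset.univ.filter (fun j => r j ≠ 0)
          ↔ pp i ∈ Finset.univ.filter (fun j => s j ≠ 0)) := by
    intro r s pp
    constructor
    · intro h i
      simp only [Finset.mem_filter, Finset.mem_univ, true_and]
      have h2 := h (pp i)
      rw [Equiv.symm_apply_apply] at h2
      exact h2.symm
    · intro h i
      have h2 := h (pp.symm i)
      simp only [Finset.mem_filter, Finset.mem_univ, true_and] at h2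
      rw [Equiv.apply_symm_apply] at h2
      exact h2.symm
  -- sum over permutations of pattern-respecting checkable vectors
  have hpermcount : ∀ r : Fin (c * n) → F, hammingNorm r = c * l →
      (∑ pp : Equiv.Perm (Fin (c * n)),
        Nat.card {s : Fin (c * n) → F //
          (∀ b : Fin (c * n / d), ∑ j : Fin d, s (B (b, j)) = 0)
            ∧ ∀ i, (s i ≠ 0 ↔ r (pp.symm i) ≠ 0)})
      = Nw * ((c * l).factorial * (c * n - c * l).factorial) := by
    intro r hr
    rw [Finset.sum_congr rfl (fun pp _ => natCard_filter
      (fun s : Fin (c * n) → F =>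
        (∀ b : Fin (c * n / d), ∑ j : Fin d, s (B (b, j)) = 0)
          ∧ ∀ i, (s i ≠ 0 ↔ r (pp.symm i) ≠ 0)))]
    rw [Finset.sum_comm]
    have hinner : ∀ s : Fin (c * n) → F,
        (∑ pp : Equiv.Perm (Fin (c * n)),
          if ((∀ b : Fin (c * n / d), ∑ j : Fin d, s (B (b, j)) = 0)
              ∧ ∀ i, (s i ≠ 0 ↔ r (pp.symm i) ≠ 0)) then (1:ℕ) else 0)
        = (if ((∀ b : Fin (c * n / d), ∑ j : Fin d, s (B (b, j)) = 0)
              ∧ hammingNorm s = c * l) then (1:ℕ) else 0)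
          * ((c * l).factorial * (c * n - c * l).factorial) := by
      intro s
      by_cases hP : ∀ b : Fin (c * n / d), ∑ j : Fin d, s (B (b, j)) = 0
      · have h1 : ∀ pp : Equiv.Perm (Fin (c * n)),
            (if ((∀ b : Fin (c * n / d), ∑ j : Fin d, s (B (b, j)) = 0)
                ∧ ∀ i, (s i ≠ 0 ↔ r (pp.symm i) ≠ 0)) then (1:ℕ) else 0)
            = if (∀ i, i ∈ Finset.univ.filter (fun j => r j ≠ 0)
                ↔ pp i ∈ Finset.univ.filter (fun j => s j ≠ 0)) then (1:ℕ) else 0 := by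
          intro pp
          refine if_congr ?_ rfl rfl
          rw [and_iff_right hP]
          exact hpat r s pp
        rw [Finset.sum_congr rfl (fun pp _ => h1 pp)]
        rw [← natCard_filter (fun pp : Equiv.Perm (Fin (c * n)) =>
          ∀ i, i ∈ Finset.univ.filter (fun j => r j ≠ 0)
            ↔ pp i ∈ Finset.univ.filter (fun j => s j ≠ 0))]
        rw [card_perm_maps]
        have hA : (Finset.univ.filter (fun j => r j ≠ 0)).card = c * l := by
          rw [← hammingNorm_def, hr]
        have hBs : (Finset.univ.filter (fun j => s j ≠ 0)).card = hammingNorm s :=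
          (hammingNorm_def s).symm
        rw [hA, hBs, Fintype.card_fin]
        by_cases hs : hammingNorm s = c * l
        · rw [if_pos hs.symm, if_pos ⟨hP, hs⟩, one_mul]
        · rw [if_neg (fun hh => hs hh.symm), if_neg (fun hh => hs hh.2), zero_mul]
      · rw [Finset.sum_eq_zero (fun pp _ => by
          rw [if_neg (fun hcond => hP hcond.1)])]
        rw [if_neg (fun hcond => hP hcond.1), zero_mul]
    rw [Finset.sum_congr rfl (fun s _ => hinner s), ← Finset.sum_mul]
    congr 1
    rw [hNw, natCard_filter]
  -- count for a fixed x of weight l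
  have hxcount : ∀ x : Fin n → F, hammingNorm x = l →
      (∑ pp : Equiv.Perm (Fin (c * n)), ∑ μ : Fin (c * n) → Fˣ,
        if chkFun c d n pp μ x = 0 then (1:ℕ) else 0)
      = (Fintype.card Fˣ) ^ (c * n - c * l)
          * (Nw * ((c * l).factorial * (c * n - c * l).factorial)) := by
    intro x hx
    have hr : hammingNorm (repFun c n x) = c * l := by rw [hnormrep, hx]
    have hrz : Nat.card {j : Fin (c * n) // repFun c n x j = 0} = c * n - c * l := by
      have h1 : Nat.card {j : Fin (c * n) // repFun c n x j = 0}
          = Nat.card {j : Fin (c * n) // ¬ (repFun c n x j ≠ 0)} :=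
        Nat.card_congr (Equiv.subtypeEquivRight (fun j => not_not.symm))
      rw [h1, Nat.card_eq_fintype_card, Fintype.card_subtype_compl, Fintype.card_fin,
        Fintype.card_subtype, ← hammingNorm_def, hr]
    have hmu : ∀ pp : Equiv.Perm (Fin (c * n)),
        (∑ μ : Fin (c * n) → Fˣ, if chkFun c d n pp μ x = 0 then (1:ℕ) else 0)
        = Nat.card {s : Fin (c * n) → F //
            (∀ b : Fin (c * n / d), ∑ j : Fin d, s (B (b, j)) = 0)
              ∧ ∀ i, (s i ≠ 0 ↔ repFun c n x (pp.symm i) ≠ 0)}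
          * (Fintype.card Fˣ) ^ (c * n - c * l) := by
      intro pp
      have e1 : (∑ μ : Fin (c * n) → Fˣ, if chkFun c d n pp μ x = 0 then (1:ℕ) else 0)
          = Nat.card {μ : Fin (c * n) → Fˣ //
              (fun s : Fin (c * n) → F => ∀ b : Fin (c * n / d), ∑ j : Fin d, s (B (b, j)) = 0)
                (fun i => ((μ i : F) * (fun i' => repFun c n x (pp.symm i')) i))} := by
        rw [natCard_filter]
        apply Finset.sum_congr rfl
        intro μ _
        exact if_congr ((hchk pp μ x).trans Iff.rfl) rfl rfl
      rw [e1, card_mu (fun s : Fin (c * n) → F =>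
        ∀ b : Fin (c * n / d), ∑ j : Fin d, s (B (b, j)) = 0)
        (fun i' => repFun c n x (pp.symm i'))]
      have hz' : Nat.card {i : Fin (c * n) // repFun c n x (pp.symm i) = 0}
          = c * n - c * l :=
        (Nat.card_congr (Equiv.subtypeEquiv pp.symm (fun a => Iff.rfl))).trans hrz
      show Nat.card {s : Fin (c * n) → F //
          (∀ b : Fin (c * n / d), ∑ j : Fin d, s (B (b, j)) = 0)
            ∧ ∀ i, (s i ≠ 0 ↔ repFun c n x (pp.symm i) ≠ 0)}
          * (Fintype.card Fˣ) ^ Nat.card {i : Fin (c * n) // repFun c n x (pp.symm i) = 0}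
        = _
      rw [hz']
    rw [Finset.sum_congr rfl (fun pp _ => hmu pp), ← Finset.sum_mul,
      hpermcount _ hr, mul_comm]
  -- total sum
  have hS : (∑ pp : Equiv.Perm (Fin (c * n)), ∑ μ : Fin (c * n) → Fˣ, Acount c d n pp μ l)
      = (n.choose l * (Fintype.card Fˣ) ^ l)
        * ((Fintype.card Fˣ) ^ (c * n - c * l)
          * (Nw * ((c * l).factorial * (c * n - c * l).factorial))) := by
    have hA : ∀ (pp : Equiv.Perm (Fin (c * n))) (μ : Fin (c * n) → Fˣ),
        Acount c d n pp μ l = ∑ x : Fin n → F,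
          if (chkFun c d n pp μ x = 0 ∧ hammingNorm x = l) then (1:ℕ) else 0 := by
      intro pp μ
      rw [Acount, natCard_filter]
    rw [Finset.sum_congr rfl (fun pp _ => Finset.sum_congr rfl (fun μ _ => hA pp μ))]
    rw [Finset.sum_congr rfl (fun pp _ => Finset.sum_comm), Finset.sum_comm]
    have hx1 : ∀ x : Fin n → F,
        (∑ pp : Equiv.Perm (Fin (c * n)), ∑ μ : Fin (c * n) → Fˣ,
          if (chkFun c d n pp μ x = 0 ∧ hammingNorm x = l) then (1:ℕ) else 0)
        = (if hammingNorm x = l then (1:ℕ) else 0)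
          * ((Fintype.card Fˣ) ^ (c * n - c * l)
            * (Nw * ((c * l).factorial * (c * n - c * l).factorial))) := by
      intro x
      by_cases hx : hammingNorm x = l
      · rw [if_pos hx, one_mul, ← hxcount x hx]
        exact Finset.sum_congr rfl (fun pp _ => Finset.sum_congr rfl
          (fun μ _ => if_congr (and_iff_left hx) rfl rfl))
      · rw [if_neg hx, zero_mul]
        exact Finset.sum_eq_zero (fun pp _ => Finset.sum_eq_zero (fun μ _ =>
          if_neg (fun hcond => hx hcond.2)))
    rw [Finset.sum_congr rfl (fun x _ => hx1 x), ← Finset.sum_mul]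
    congr 1
    rw [← natCard_filter (fun x : Fin n → F => hammingNorm x = l)]
    have := card_weight (F := F) (ι := Fin n) l
    rw [this, Fintype.card_fin]
  -- final arithmetic
  have hu : ((Fintype.card Fˣ : ℕ) : ℝ) = (Fintype.card F : ℝ) - 1 := by
    rw [Fintype.card_units]
    have h1 : 1 ≤ Fintype.card F := Fintype.card_pos
    push_cast [Nat.cast_sub h1]; ring
  have hq2 : 1 < Fintype.card F := Fintype.one_lt_card
  have hqm1 : (0:ℝ) < (Fintype.card F : ℝ) - 1 := by
    have : (1:ℝ) < (Fintype.card F : ℝ) := by exact_mod_cast hq2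
    linarith
  have hwN : c * l ≤ c * n := Nat.mul_le_mul_left c hl
  have hlw : l ≤ c * l := Nat.le_mul_of_pos_left l hc0
  have hNfact : ((c * n).factorial : ℝ)
      = ((c * n).choose (c * l)) * (c * l).factorial * (c * n - c * l).factorial := by
    exact_mod_cast (Nat.choose_mul_factorial_mul_factorial hwN).symm
  have hwl : (c - 1) * l = c * l - l := by
    rw [Nat.sub_mul, one_mul]
  have hpow : ((Fintype.card F : ℝ) - 1) ^ (c * n)
      = ((Fintype.card F : ℝ) - 1) ^ l * ((Fintype.card F : ℝ) - 1) ^ (c * n - c * l)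
        * ((Fintype.card F : ℝ) - 1) ^ (c * l - l) := by
    rw [← pow_add, ← pow_add, exp_split l (c * l) (c * n) hlw hwN]
  have hcast : (∑ pp : Equiv.Perm (Fin (c * n)), ∑ μ : Fin (c * n) → Fˣ,
      ((Acount c d n pp μ l : ℕ) : ℝ))
      = (((∑ pp : Equiv.Perm (Fin (c * n)), ∑ μ : Fin (c * n) → Fˣ,
          Acount c d n pp μ l : ℕ)) : ℝ) := by
    push_cast
    rfl
  rw [expA, hcast, hS, hgco, hwl]
  have hch0 : (0:ℝ) < ((c * n).choose (c * l) : ℝ) := by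
    exact_mod_cast Nat.choose_pos hwN
  have hf0 : (0:ℝ) < ((c * n).factorial : ℝ) := by
    exact_mod_cast (c * n).factorial_pos
  rw [div_eq_div_iff (by positivity) (by positivity)]
  push_cast [hu]
  rw [hNfact, hpow]
  ring
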